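/- If n = 2^m with m ≥ 1, then the orbit of (1, n−1) under the maps α, β, γ, δ contains every pair (a,b) of positive integers with a + b = n; that is, n is complete. -/

import Mathlib

/-- One application of an alternative-law map on pairs of positive integers:
`α(r,s) = (2r, s-r)` for `s > r`, `β(r,s) = (r-s, 2s)` for `r > s`,
`γ(r,s) = (r/2, s + r/2)` for `r` even, `δ(r,s) = (r + s/2, s/2)` for `s` even. -/
def AltStep (p q : ℕ × ℕ) : Prop :=
  (p.1 < p.2 ∧ q = (2 * p.1, p.2 - p.1)) ∨
  (p.2 < p.1 ∧ q = (p.1 - p.2, 2 * p.2)) ∨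
  (∃ t, p.1 = 2 * t ∧ q = (t, p.2 + t)) ∨
  (∃ t, p.2 = 2 * t ∧ q = (p.1 + t, t))

/-- `q` belongs to the orbit `O(p)`. -/
def InOrbit (p q : ℕ × ℕ) : Prop := Relation.ReflTransGen AltStep p q

lemma altStepA {r s : ℕ} (h : r < s) : AltStep (r, s) (2 * r, s - r) :=
  Or.inl ⟨h, rfl⟩

lemma altStepB {r s : ℕ} (h : s < r) : AltStep (r, s) (r - s, 2 * s) :=
  Or.inr (Or.inl ⟨h, rfl⟩)

lemma altStepC (t s : ℕ) : AltStep (2 * t, s) (t, s + t) :=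
  Or.inr (Or.inr (Or.inl ⟨t, rfl, rfl⟩))

lemma altStepD (r t : ℕ) : AltStep (r, 2 * t) (r + t, t) :=
  Or.inr (Or.inr (Or.inr ⟨t, rfl, rfl⟩))

lemma aux (m : ℕ) (hm : 1 ≤ m) :
    ∀ k a : ℕ, 0 < a → a < 2 ^ m → 2 ^ (m - 1) ∣ 2 ^ k * a →
      Relation.ReflTransGen AltStep (a, 2 ^ m - a) (2 ^ (m - 1), 2 ^ (m - 1)) ∧
      Relation.ReflTransGen AltStep (2 ^ (m - 1), 2 ^ (m - 1)) (a, 2 ^ m - a) := by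
  have hmm : 2 ^ m = 2 ^ (m - 1) * 2 := by
    rw [← pow_succ]; congr 1; omega
  have hpos : 0 < 2 ^ (m - 1) := Nat.pow_pos (by norm_num)
  intro k
  induction k with
  | zero =>
    intro a ha han hdvd
    have ha' : a = 2 ^ (m - 1) := by
      simp only [pow_zero, one_mul] at hdvd
      obtain ⟨c, hc⟩ := hdvd
      have hc1 : c = 1 := by
        rcases Nat.lt_or_ge c 2 with h | h
        · interval_cases c
          · omega
          · rfl
        · exfalso
          have : 2 ^ (m - 1) * 2 ≤ 2 ^ (m - 1) * c := Nat.mul_le_mul_left _ h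
          omega
      rw [hc1, mul_one] at hc
      exact hc
    subst ha'
    have : 2 ^ m - 2 ^ (m - 1) = 2 ^ (m - 1) := by omega
    rw [this]
    exact ⟨Relation.ReflTransGen.refl, Relation.ReflTransGen.refl⟩
  | succ k ih =>
    intro a ha han hdvd
    have hdvd' : 2 ^ (m - 1) ∣ 2 ^ k * (2 * a) := by
      have : 2 ^ k * (2 * a) = 2 ^ (k + 1) * a := by ring
      rw [this]; exact hdvd
    rcases Nat.lt_trichotomy (2 * a) (2 ^ m) with hlt | heq | hgt
    · -- a' = 2 * a, use α forward, γ backward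
      obtain ⟨ih1, ih2⟩ := ih (2 * a) (by omega) hlt hdvd'
      have hfwd : AltStep (a, 2 ^ m - a) (2 * a, 2 ^ m - 2 * a) := by
        have h := altStepA (r := a) (s := 2 ^ m - a) (by omega)
        have he : (2 * a, 2 ^ m - a - a) = (2 * a, 2 ^ m - 2 * a) := by
          congr 1; omega
        rwa [he] at h
      have hbwd : AltStep (2 * a, 2 ^ m - 2 * a) (a, 2 ^ m - a) := by
        have h := altStepC a (2 ^ m - 2 * a)
        have he : (a, 2 ^ m - 2 * a + a) = (a, 2 ^ m - a) := by
          congr 1; omega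
        rwa [he] at h
      exact ⟨Relation.ReflTransGen.head hfwd ih1, ih2.tail hbwd⟩
    · -- a = 2^(m-1)
      have ha' : a = 2 ^ (m - 1) := by omega
      subst ha'
      have : 2 ^ m - 2 ^ (m - 1) = 2 ^ (m - 1) := by omega
      rw [this]
      exact ⟨Relation.ReflTransGen.refl, Relation.ReflTransGen.refl⟩
    · -- a' = 2 * a - 2^m, use β forward, δ backward
      have hdvd2 : 2 ^ (m - 1) ∣ 2 ^ k * 2 ^ m := by
        rw [← pow_add]; exact pow_dvd_pow 2 (by omega)
      have e1 : 2 ^ k * (2 * a) = 2 ^ k * (2 * a - 2 ^ m) + 2 ^ k * 2 ^ m := by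
        rw [← Nat.mul_add]; congr 1; omega
      have hdvd'' : 2 ^ (m - 1) ∣ 2 ^ k * (2 * a - 2 ^ m) := by
        have e2 : 2 ^ k * (2 * a - 2 ^ m) = 2 ^ k * (2 * a) - 2 ^ k * 2 ^ m := by omega
        rw [e2]; exact Nat.dvd_sub hdvd' hdvd2
      obtain ⟨ih1, ih2⟩ := ih (2 * a - 2 ^ m) (by omega) (by omega) hdvd''
      have hfwd : AltStep (a, 2 ^ m - a) (2 * a - 2 ^ m, 2 ^ m - (2 * a - 2 ^ m)) := by
        have h := altStepB (r := a) (s := 2 ^ m - a) (by omega)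
        have he : (a - (2 ^ m - a), 2 * (2 ^ m - a)) =
            (2 * a - 2 ^ m, 2 ^ m - (2 * a - 2 ^ m)) := by
          congr 1 <;> omega
        rwa [he] at h
      have hbwd : AltStep (2 * a - 2 ^ m, 2 ^ m - (2 * a - 2 ^ m)) (a, 2 ^ m - a) := by
        have h := altStepD (2 * a - 2 ^ m) (2 ^ m - a)
        have he1 : (2 * a - 2 ^ m, 2 * (2 ^ m - a)) =
            (2 * a - 2 ^ m, 2 ^ m - (2 * a - 2 ^ m)) := by
          congr 1; omega
        have he2 : (2 * a - 2 ^ m + (2 ^ m - a), 2 ^ m - a) = (a, 2 ^ m - a) := by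
          congr 1; omega
        rwa [he1, he2] at h
      exact ⟨Relation.ReflTransGen.head hfwd ih1, ih2.tail hbwd⟩

theorem pow_two_complete (m : ℕ) (hm : 1 ≤ m) (n : ℕ) (hn : n = 2 ^ m) :
    ∀ a b : ℕ, 0 < a → 0 < b → a + b = n → InOrbit (1, n - 1) (a, b) := by
  subst hn
  intro a b ha hb hab
  have h2m : 2 ≤ 2 ^ m := by
    calc 2 = 2 ^ 1 := rfl
    _ ≤ 2 ^ m := Nat.pow_le_pow_right (by norm_num) hm
  have h1 := (aux m hm (m - 1) 1 one_pos (by omega)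
    (by rw [mul_one])).1
  have h2 := (aux m hm (m - 1) a ha (by omega)
    (Dvd.intro a rfl)).2
  have hb' : b = 2 ^ m - a := by omega
  subst hb'
  exact h1.trans h2
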